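/- Assume Δ ≥ 0 and let V be either of the two values V_+ or V_-. Then V(1+V)(λ+V) = n(V - V_*)(1+V)²; consequently, if V ≠ -1 then G(V, 1+V) = 0 and F(V, 1+V) = 0, i.e. the critical points determined by V_± lie on the critical line C = 1+V and are common zeros of F and G. -/

import Mathlib

noncomputable section

/-- `V_* = (κ - 2(λ-1))/(nγ)` -/
def Vstar (n γ lam κ : ℝ) : ℝ := (κ - 2*(lam - 1)) / (n*γ)

/-- `α = (κ(γ-1) + 2(λ-1))/(2γ)` -/
def alphaP (γ lam κ : ℝ) : ℝ := (κ*(γ - 1) + 2*(lam - 1)) / (2*γ)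

/-- `k₁ = 1 + (n-1)(γ-1)/2` -/
def K1 (n γ : ℝ) : ℝ := 1 + (n - 1)*(γ - 1)/2

/-- `k₂ = ((n-1)(γ-1) + (γ-3)(λ-1))/2` -/
def K2 (n γ lam : ℝ) : ℝ := ((n - 1)*(γ - 1) + (γ - 3)*(lam - 1)) / 2

/-- `k₃ = (γ-1)(λ-1)/2` -/
def K3 (γ lam : ℝ) : ℝ := (γ - 1)*(lam - 1)/2

/-- `G(V,C) = nC²(V - V_*) - V(1+V)(λ+V)` -/
def Gf (n γ lam κ V C : ℝ) : ℝ := n*C^2*(V - Vstar n γ lam κ) - V*(1+V)*(lam+V)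

/-- `F(V,C) = C[C²(1 + α/(1+V)) - k₁(1+V)² + k₂(1+V) - k₃]` -/
def Ff (n γ lam κ V C : ℝ) : ℝ :=
  C*(C^2*(1 + alphaP γ lam κ/(1+V)) - K1 n γ*(1+V)^2 + K2 n γ lam*(1+V) - K3 γ lam)

/-- The discriminant `Δ = (γ-2)²μ² - 2[γm(γ+2) - κ(γ-2)]μ + (γm+κ)²`, with `m = n-1`, `μ = λ-1`. -/
def DeltaP (n γ lam κ : ℝ) : ℝ :=
  (γ - 2)^2*(lam - 1)^2 - 2*(γ*(n-1)*(γ+2) - κ*(γ-2))*(lam - 1) + (γ*(n-1) + κ)^2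

/-- `V₊ = (1/(2mγ))[(γ-2)μ + κ - mγ + √Δ]` -/
def Vplus (n γ lam κ : ℝ) : ℝ :=
  (1/(2*(n-1)*γ)) * ((γ-2)*(lam-1) + κ - (n-1)*γ + Real.sqrt (DeltaP n γ lam κ))

/-- `V₋ = (1/(2mγ))[(γ-2)μ + κ - mγ - √Δ]` -/
def Vminus (n γ lam κ : ℝ) : ℝ :=
  (1/(2*(n-1)*γ)) * ((γ-2)*(lam-1) + κ - (n-1)*γ - Real.sqrt (DeltaP n γ lam κ))

/-- for `V = V_±` one has `V(1+V)(λ+V) = n(V-V_*)(1+V)²`; hence if `V ≠ -1`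
then `(V, 1+V)` lies on the critical line `C = 1+V` and is a common zero of `F` and `G`. -/
theorem stmt_4 (n γ lam κ V : ℝ) (hn : n = 2 ∨ n = 3) (hγ : 1 < γ)
    (hΔ : 0 ≤ DeltaP n γ lam κ)
    (hV : V = Vplus n γ lam κ ∨ V = Vminus n γ lam κ) :
    V*(1+V)*(lam+V) = n*(V - Vstar n γ lam κ)*(1+V)^2 ∧
    (V ≠ -1 → Gf n γ lam κ V (1+V) = 0 ∧ Ff n γ lam κ V (1+V) = 0) := by
  have hm : (n:ℝ) - 1 ≠ 0 := by rcases hn with h|h <;> rw [h] <;> norm_num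
  have hγ0 : γ ≠ 0 := by linarith
  have hn0 : n ≠ 0 := by rcases hn with h|h <;> rw [h] <;> norm_num
  have hs : Real.sqrt (DeltaP n γ lam κ) ^ 2 = DeltaP n γ lam κ := Real.sq_sqrt hΔ
  have hE : (2*(n-1)*γ*V - ((γ-2)*(lam-1) + κ - (n-1)*γ))^2 = DeltaP n γ lam κ := by
    rcases hV with h|h
    · rw [h, Vplus, ← hs]; field_simp
      rw [Real.sqrt_sq (Real.sqrt_nonneg _)]; ring
    · rw [h, Vminus, ← hs]; field_simp
      rw [Real.sqrt_sq (Real.sqrt_nonneg _)]; ring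
  simp only [DeltaP] at hE
  have hQ : (n-1)*γ*V^2 - (γ*lam - n*γ - 2*(lam-1) + κ)*V + (2*(lam-1) - κ) = 0 := by
    have h4 : (4*((n-1)*γ)) *
        ((n-1)*γ*V^2 - (γ*lam - n*γ - 2*(lam-1) + κ)*V + (2*(lam-1) - κ)) = 0 := by
      linear_combination hE
    exact (mul_eq_zero.mp h4).resolve_left
      (mul_ne_zero (by norm_num : (4:ℝ) ≠ 0) (mul_ne_zero hm hγ0))
  have key : V*(1+V)*(lam+V) = n*(V - Vstar n γ lam κ)*(1+V)^2 := by
    have hVs : Vstar n γ lam κ * (n*γ) = κ - 2*(lam-1) := by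
      rw [Vstar]; field_simp
    apply mul_left_cancel₀ hγ0
    linear_combination (-(1+V))*hQ + (1+V)^2*hVs
  refine ⟨key, fun hV1 => ?_⟩
  have h1V : (1:ℝ) + V ≠ 0 := by
    intro h; apply hV1; linarith
  constructor
  · rw [Gf]; linear_combination -key
  · have hF : Ff n γ lam κ V (1+V) = ((1+V) * (-(γ-1)) *
        ((n-1)*γ*V^2 - (γ*lam - n*γ - 2*(lam-1) + κ)*V + (2*(lam-1) - κ))) / (2*γ) := by
      rw [Ff, alphaP, K1, K2, K3]
      field_simp
      ring
    rw [hF, hQ, mul_zero, zero_div]
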